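/- For any Cauchy sequence u in A* with respect to the profinite metric, the set F_u = {L regular | ∃n₀ ∀n ≥ n₀ : u_n ∈ L} is an ultrafilter of the Boolean algebra of regular languages over A*. -/

import Mathlib

/-- A finite monoid of cardinality k separates the words x and y if some monoid morphism
from the free monoid into it distinguishes them. -/
def SeparatesCard (A : Type) (k : ℕ) (x y : List A) : Prop :=
  ∃ (M : Type) (_ : Monoid M) (_ : Fintype M), Fintype.card M = k ∧
    ∃ φ : FreeMonoid A →* M, φ x ≠ φ y

open Classical in
/-- The profinite metric d(x,y) = 2^{-min{|M| : M separates x and y}} on A*. -/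
noncomputable def pdist {A : Type} (x y : List A) : ℝ :=
  if h : {k : ℕ | SeparatesCard A k x y}.Nonempty then
    ((2 : ℝ) ^ (sInf {k : ℕ | SeparatesCard A k x y}))⁻¹
  else 0

/-- A Cauchy sequence of words with respect to the profinite metric. -/
def IsPCauchy {A : Type} (u : ℕ → List A) : Prop :=
  ∀ ε : ℝ, 0 < ε → ∃ N : ℕ, ∀ m n : ℕ, N ≤ m → N ≤ n → pdist (u m) (u n) < ε

/-- A language is regular iff it is recognized by a finite monoid. -/
def RegularLang {A : Type} (L : Set (List A)) : Prop :=
  ∃ (M : Type) (_ : Monoid M) (_ : Fintype M) (φ : FreeMonoid A →* M) (S : Set M),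
    L = φ ⁻¹' S

/-- The set of regular languages eventually containing the sequence u. -/
def Fu {A : Type} (u : ℕ → List A) : Set (Set (List A)) :=
  {L | RegularLang L ∧ ∃ n₀ : ℕ, ∀ n : ℕ, n₀ ≤ n → u n ∈ L}

lemma eventually_const {A M : Type} [Monoid M] [Fintype M] (φ : FreeMonoid A →* M)
    {u : ℕ → List A} (hu : IsPCauchy u) : ∃ N : ℕ, ∀ n, N ≤ n → φ (u n) = φ (u N) := by
  obtain ⟨N, hN⟩ := hu (((2 : ℝ) ^ (Fintype.card M))⁻¹) (by positivity)
  refine ⟨N, fun n hn => ?_⟩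
  by_contra h
  have hsep : SeparatesCard A (Fintype.card M) (u n) (u N) :=
    ⟨M, ‹_›, ‹_›, rfl, φ, h⟩
  have hne : {k : ℕ | SeparatesCard A k (u n) (u N)}.Nonempty := ⟨_, hsep⟩
  have hle : sInf {k : ℕ | SeparatesCard A k (u n) (u N)} ≤ Fintype.card M :=
    Nat.sInf_le hsep
  have hεle : ((2 : ℝ) ^ (Fintype.card M))⁻¹ ≤ pdist (u n) (u N) := by
    rw [pdist, dif_pos hne]
    exact inv_anti₀ (by positivity) (pow_le_pow_right₀ one_le_two hle)
  exact absurd (hN n N hn le_rfl) (not_lt.mpr hεle)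

/-- For any Cauchy sequence u in A* (profinite metric), the set
F_u = {L regular | ∃n₀ ∀n ≥ n₀ : u_n ∈ L} is an ultrafilter of the Boolean algebra
of regular languages over A*. -/
theorem stmt8 {A : Type} [Fintype A] (u : ℕ → List A) (hu : IsPCauchy u) :
    (∀ L ∈ Fu u, RegularLang L) ∧
    (Fu u).Nonempty ∧
    (∅ : Set (List A)) ∉ Fu u ∧
    (∀ L K : Set (List A), L ∈ Fu u → RegularLang K → L ⊆ K → K ∈ Fu u) ∧
    (∀ L K : Set (List A), L ∈ Fu u → K ∈ Fu u → L ∩ K ∈ Fu u) ∧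
    (∀ L : Set (List A), RegularLang L → L ∈ Fu u ∨ Lᶜ ∈ Fu u) := by
  refine ⟨fun L hL => hL.1, ?_, ?_, ?_, ?_, ?_⟩
  · exact ⟨Set.univ, ⟨Unit, inferInstance, inferInstance, 1, Set.univ, by ext; simp; trivial⟩,
      0, fun n _ => trivial⟩
  · rintro ⟨-, n₀, h⟩
    exact h n₀ le_rfl
  · rintro L K ⟨-, n₀, h⟩ hK hsub
    exact ⟨hK, n₀, fun n hn => hsub (h n hn)⟩
  · rintro L K ⟨⟨M, _, _, φ, S, rfl⟩, n₀, h⟩ ⟨⟨M', _, _, ψ, T, rfl⟩, n₁, h'⟩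
    refine ⟨⟨M × M', inferInstance, inferInstance, φ.prod ψ, S ×ˢ T, ?_⟩,
      max n₀ n₁, fun n hn => ⟨h n (le_of_max_le_left hn), h' n (le_of_max_le_right hn)⟩⟩
    ext w
    exact Iff.rfl
  · rintro L ⟨M, _, _, φ, S, rfl⟩
    obtain ⟨N, hN⟩ := eventually_const φ hu
    by_cases hS : φ (u N) ∈ S
    · exact Or.inl ⟨⟨M, ‹_›, ‹_›, φ, S, rfl⟩, N, fun n hn => by
        show φ (u n) ∈ S; rw [hN n hn]; exact hS⟩
    · refine Or.inr ⟨⟨M, ‹_›, ‹_›, φ, Sᶜ, by ext; exact Iff.rfl⟩, N, fun n hn => ?_⟩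
      show φ (u n) ∉ S; rw [hN n hn]
      exact hS
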